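/- Let m ≥ 3 be odd, n = 3^m - 1, and δ₂ = (3^{m-1} - 1)/4 + 3^{m-2}. Then the 3-cyclotomic coset C_{δ₂} modulo n has exactly m elements. -/

import Mathlib

/-- The 3-cyclotomic coset of `s` modulo `n`. -/
def cyclotomicCoset (n s : ℕ) : Set ℕ := {k | ∃ j : ℕ, k = s * 3 ^ j % n}

lemma key_int (a c : ℤ) (ha : 1 ≤ a) (hc : 1 ≤ c) (hca : c ≤ a) :
    ¬ (27 * a - 1) ∣ ((21 * a - 1) * (9 * c - 1)) := by
  intro h
  have h2 : (27 * a - 1) ∣ (6 * a - 2 * c) := by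
    have hd : (27 * a - 1) ∣ (7 * c - 1) * (27 * a - 1) := dvd_mul_left _ _
    have := dvd_sub h hd
    have heq : (21 * a - 1) * (9 * c - 1) - (7 * c - 1) * (27 * a - 1)
        = 6 * a - 2 * c := by ring
    rwa [heq] at this
  have hle := Int.le_of_dvd (by linarith) h2
  linarith

theorem stmt3 (m : ℕ) (hm : 3 ≤ m) (hodd : Odd m) :
    (cyclotomicCoset (3 ^ m - 1) ((3 ^ (m - 1) - 1) / 4 + 3 ^ (m - 2))).ncard = m := by
  set n := 3 ^ m - 1 with hn
  set δ := (3 ^ (m - 1) - 1) / 4 + 3 ^ (m - 2) with hδ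
  have hm0 : 0 < m := by omega
  set a := 3 ^ (m - 3) with ha
  have ha1 : 1 ≤ a := Nat.one_le_pow _ _ (by norm_num)
  have h3m : 3 ^ m = 27 * a := by
    calc 3 ^ m = 3 ^ (3 + (m - 3)) := by congr 1; omega
      _ = 27 * a := by rw [pow_add, ha]; norm_num
  have h3m1 : 3 ^ (m - 1) = 9 * a := by
    calc 3 ^ (m - 1) = 3 ^ (2 + (m - 3)) := by congr 1; omega
      _ = 9 * a := by rw [pow_add, ha]; norm_num
  have h3m2 : 3 ^ (m - 2) = 3 * a := by
    calc 3 ^ (m - 2) = 3 ^ (1 + (m - 3)) := by congr 1; omega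
      _ = 3 * a := by rw [pow_add, ha]; norm_num
  have hamod : a % 4 = 1 := by
    obtain ⟨s, hs⟩ := hodd
    have hms : m - 3 = 2 * (s - 1) := by omega
    rw [ha, hms, pow_mul]
    rw [Nat.pow_mod]
    norm_num
  have h4δ : 4 * δ = 21 * a - 1 := by
    rw [hδ, h3m1, h3m2]
    omega
  have hnval : n = 27 * a - 1 := by rw [hn, h3m]
  have hnpos : 0 < n := by omega
  have hnZ : (n : ℤ) = 27 * (a : ℤ) - 1 := by
    rw [hnval]
    push_cast [Nat.cast_sub (by omega : 1 ≤ 27 * a)]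
    ring
  -- 3^m = 1 in ZMod n
  have h3one : (3 : ZMod n) ^ m = 1 := by
    have : ((3 ^ m : ℕ) : ZMod n) = ((n + 1 : ℕ) : ZMod n) := by
      congr 1
      omega
    push_cast at this
    rw [ZMod.natCast_self] at this
    simpa using this
  have hu3 : IsUnit (3 : ZMod n) := by
    apply IsUnit.of_mul_eq_one (a := (3 : ZMod n)) (3 ^ (m - 1))
    rw [← pow_succ']
    have : m - 1 + 1 = m := by omega
    rw [this, h3one]
  -- key step
  have hkey : ∀ i : ℕ, 2 ≤ i → i < m → ((δ : ZMod n) * 3 ^ i ≠ δ) := by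
    intro i h2i him heq
    have hMod : δ * 3 ^ i ≡ δ [MOD n] := by
      rw [← ZMod.natCast_eq_natCast_iff]
      push_cast
      exact heq
    have hdvd : (n : ℤ) ∣ (δ : ℤ) - (δ : ℤ) * 3 ^ i := by
      have := hMod.dvd
      push_cast at this
      exact this
    have hdvd4 : (n : ℤ) ∣ (21 * (a : ℤ) - 1) * (9 * (3 ^ (i - 2) : ℤ) - 1) := by
      have h4cast : (4 : ℤ) * (δ : ℤ) = 21 * (a : ℤ) - 1 := by
        have := congrArg (fun x : ℕ => (x : ℤ)) h4δ
        push_cast [Nat.cast_sub (by omega : 1 ≤ 21 * a)] at this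
        linarith
      have h3i : (3 : ℤ) ^ i = 9 * 3 ^ (i - 2) := by
        calc (3 : ℤ) ^ i = 3 ^ ((i - 2) + 2) := by congr 1; omega
          _ = 9 * 3 ^ (i - 2) := by rw [pow_add]; ring
      have : (21 * (a : ℤ) - 1) * (9 * (3 ^ (i - 2) : ℤ) - 1)
          = 4 * ((δ : ℤ) * 3 ^ i - δ) := by
        rw [← h4cast, h3i]
        ring
      rw [this]
      exact Dvd.dvd.mul_left (dvd_sub_comm.mp hdvd) 4
    rw [hnZ] at hdvd4
    exact key_int (a : ℤ) (3 ^ (i - 2)) (by exact_mod_cast ha1)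
      (one_le_pow₀ (by norm_num))
      (by
        have : (3 : ℤ) ^ (i - 2) ≤ 3 ^ (m - 3) := by
          apply pow_le_pow_right₀ (by norm_num)
          omega
        exact_mod_cast this) hdvd4
  -- extend to all 1 ≤ i < m
  have hkey1 : ∀ i : ℕ, 1 ≤ i → i < m → ((δ : ZMod n) * 3 ^ i ≠ δ) := by
    intro i h1i him heq
    rcases Nat.lt_or_ge i 2 with h | h
    · -- i = 1
      have hi1 : i = 1 := by omega
      rw [hi1] at heq
      have hall : ∀ k : ℕ, (δ : ZMod n) * 3 ^ k = δ := by
        intro k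
        induction k with
        | zero => simp
        | succ k ih =>
          rw [pow_succ, ← mul_assoc, ih]
          simpa using heq
      exact hkey (m - 1) (by omega) (by omega) (hall (m - 1))
    · exact hkey i h him heq
  -- injectivity helper
  have hinjlt : ∀ j k : ℕ, j < k → k < m → δ * 3 ^ j % n ≠ δ * 3 ^ k % n := by
    intro j k hjk hkm hfeq
    have hMod : δ * 3 ^ j ≡ δ * 3 ^ k [MOD n] := hfeq
    have hz : ((δ : ZMod n)) * 3 ^ j = (δ : ZMod n) * 3 ^ k := by
      have := (ZMod.natCast_eq_natCast_iff _ _ _).mpr hMod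
      push_cast at this
      exact this
    have h3k : (3 : ZMod n) ^ k = 3 ^ (k - j) * 3 ^ j := by
      rw [← pow_add]
      congr 1
      omega
    rw [h3k, ← mul_assoc] at hz
    have huj : IsUnit ((3 : ZMod n) ^ j) := hu3.pow j
    have hcancel : (δ : ZMod n) = δ * 3 ^ (k - j) := huj.mul_right_cancel hz
    exact hkey1 (k - j) (by omega) (by omega) hcancel.symm
  have hinj : Set.InjOn (fun j => δ * 3 ^ j % n) (Set.Iio m) := by
    intro j hj k hk hfeq
    by_contra hne
    rcases Nat.lt_or_ge j k with h | h
    · exact hinjlt j k h hk hfeq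
    · exact hinjlt k j (by omega) hj hfeq.symm
  -- the coset equals the image of Iio m
  have hset : cyclotomicCoset n δ = (fun j => δ * 3 ^ j % n) '' (Set.Iio m) := by
    ext x
    constructor
    · rintro ⟨j, rfl⟩
      refine ⟨j % m, Nat.mod_lt _ hm0, ?_⟩
      have h1 : (3 : ℕ) ^ m ≡ 1 [MOD n] := by
        symm
        rw [Nat.modEq_iff_dvd' (Nat.one_le_pow _ _ (by norm_num))]
      have h2 : (3 : ℕ) ^ j ≡ 3 ^ (j % m) [MOD n] := by
        conv_lhs => rw [← Nat.div_add_mod j m]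
        rw [pow_add, pow_mul]
        calc ((3:ℕ) ^ m) ^ (j / m) * 3 ^ (j % m)
            ≡ 1 ^ (j / m) * 3 ^ (j % m) [MOD n] := (h1.pow _).mul_right _
          _ = 3 ^ (j % m) := by ring
      exact ((Nat.ModEq.mul_left δ h2).symm : _)
    · rintro ⟨j, _, rfl⟩
      exact ⟨j, rfl⟩
  rw [hset, Set.ncard_image_of_injOn hinj, ← Finset.coe_range,
    Set.ncard_coe_finset, Finset.card_range]
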